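/- Suppose -b > a > 0, c < 0 (real numbers), and ω ∈ ℝ. Then |iω - b + √((iω - b)² - 4ac)| > 2a, where √ denotes the principal branch. Consequently the root r₋ = 2a/(iω - b + √((iω-b)² - 4ac)) satisfies |r₋| < 1. -/

import Mathlib

/-- If `-b > a > 0` and `c < 0`, then `|iω - b + √((iω-b)² - 4ac)| > 2a`,
hence `|r₋| < 1`. -/
theorem stmt_14 (a b c : ℝ) (hab : a < -b) (ha : 0 < a) (hc : c < 0) (ω : ℝ) :
    2 * a <
      ‖(Complex.I * (ω : ℂ) - (b : ℂ) +
        ((Complex.I * (ω : ℂ) - (b : ℂ)) ^ 2 - 4 * (a : ℂ) * (c : ℂ)) ^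
          ((1 : ℂ) / 2))‖ ∧
    ‖((2 * (a : ℂ)) /
      (Complex.I * (ω : ℂ) - (b : ℂ) +
        ((Complex.I * (ω : ℂ) - (b : ℂ)) ^ 2 - 4 * (a : ℂ) * (c : ℂ)) ^
          ((1 : ℂ) / 2)))‖ < 1 := by
  have hb : b < 0 := by linarith
  set w : ℂ := (Complex.I * (ω : ℂ) - (b : ℂ)) ^ 2 - 4 * (a : ℂ) * (c : ℂ) with hw
  have hwre : w.re = b ^ 2 - ω ^ 2 - 4 * a * c := by
    simp [hw, pow_two, Complex.sub_re, Complex.mul_re, Complex.mul_im]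
  have hwim : w.im = -2 * ω * b := by
    simp [hw, pow_two, Complex.sub_im, Complex.mul_re, Complex.mul_im]
    ring
  have hsq : ‖w‖ ^ 2 = (b ^ 2 - ω ^ 2 - 4 * a * c) ^ 2 + (-2 * ω * b) ^ 2 := by
    rw [Complex.sq_norm, Complex.normSq_apply, hwre, hwim]; ring
  have habsgt : b ^ 2 + ω ^ 2 + 4 * a * c < ‖w‖ := by
    have h1 : (b ^ 2 + ω ^ 2 + 4 * a * c) ^ 2 < ‖w‖ ^ 2 := by
      rw [hsq]; nlinarith [mul_pos ha (neg_pos.2 hc), sq_nonneg b, mul_pos (mul_pos ha (neg_pos.2 hc)) (mul_pos (neg_pos.2 hb) (neg_pos.2 hb))]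
    exact lt_of_pow_lt_pow_left₀ 2 (norm_nonneg w) h1
  have hre : -b < (w ^ ((1 : ℂ) / 2)).re := by
    rw [one_div, Complex.cpow_inv_two_re]
    rw [show (-b : ℝ) = Real.sqrt (b ^ 2) by
      rw [Real.sqrt_sq_eq_abs, abs_of_neg hb]]
    apply Real.sqrt_lt_sqrt (sq_nonneg b)
    rw [hwre]; linarith
  set z : ℂ := Complex.I * (ω : ℂ) - (b : ℂ) + w ^ ((1 : ℂ) / 2) with hz
  have hzre : z.re = -b + (w ^ ((1 : ℂ) / 2)).re := by
    simp [hz, Complex.add_re, Complex.sub_re]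
  have hzabs : 2 * a < ‖z‖ := by
    have h2 : 2 * a < z.re := by rw [hzre]; linarith
    exact h2.trans_le (Complex.re_le_norm z)
  refine ⟨hzabs, ?_⟩
  have hzpos : 0 < ‖z‖ := by linarith
  rw [norm_div, div_lt_one hzpos]
  calc ‖(2 * (a : ℂ))‖ = 2 * a := by
        rw [show (2 * (a : ℂ)) = ((2 * a : ℝ) : ℂ) by push_cast; ring,
          Complex.norm_real, Real.norm_eq_abs, abs_of_pos (by linarith)]
    _ < ‖z‖ := hzabs
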